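/- Let I be a fine normal ideal on κ, ζ an ordinal, and S ⊆ κ an I-positive set. If nonempty has a winning strategy in the Banach–Mazur game BM_{<ζ}(I,S), then nonempty has a winning strategy in the pressing down game PD_{<ζ}(I,S). (That is, it is at least as hard for nonempty to win BM as to win PD.) -/

import Mathlib

open Set

noncomputable section

namespace BMPDGames

/-- `I` is an ideal on the (regular uncountable) ordinal `κ`:  a collection of subsets of
`κ` containing all singletons, closed under subsets and finite unions, with `κ ∉ I`. -/
def IsIdealOn (κ : Ordinal) (I : Set (Set Ordinal)) : Prop :=
  (∀ A ∈ I, A ⊆ Set.Iio κ) ∧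
  (∀ β < κ, ({β} : Set Ordinal) ∈ I) ∧
  (∀ A B : Set Ordinal, A ⊆ B → B ∈ I → A ∈ I) ∧
  (∀ A ∈ I, ∀ B ∈ I, A ∪ B ∈ I) ∧
  Set.Iio κ ∉ I

/-- `I` is fine: every bounded subset of `κ` belongs to `I`. -/
def IsFineIdeal (κ : Ordinal) (I : Set (Set Ordinal)) : Prop :=
  ∀ A : Set Ordinal, A ⊆ Set.Iio κ → (∃ β < κ, A ⊆ Set.Iio β) → A ∈ I

/-- `I` is normal: the diagonal union of `κ` many members of `I` belongs to `I`. -/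
def IsNormalIdeal (κ : Ordinal) (I : Set (Set Ordinal)) : Prop :=
  ∀ A : Ordinal → Set Ordinal, (∀ γ, γ < κ → A γ ∈ I) →
    {β : Ordinal | β < κ ∧ ∃ γ < β, β ∈ A γ} ∈ I

/-- `I` is a fine normal ideal on `κ`. -/
def FineNormalIdeal (κ : Ordinal) (I : Set (Set Ordinal)) : Prop :=
  IsIdealOn κ I ∧ IsFineIdeal κ I ∧ IsNormalIdeal κ I

/-- `κ` is (as an ordinal) a regular uncountable cardinal. -/
def RegUncountable (κ : Ordinal) : Prop :=
  κ.card.IsRegular ∧ Cardinal.aleph0 < κ.card ∧ κ.card.ord = κ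

/-- `C` is a club (closed unbounded) subset of `κ`: it is closed under suprema of its
bounded nonempty subsets and unbounded in `κ`. -/
def IsClubIn (κ : Ordinal) (C : Set Ordinal) : Prop :=
  C ⊆ Set.Iio κ ∧
  (∀ D : Set Ordinal, D ⊆ C → D.Nonempty → sSup D < κ → sSup D ∈ C) ∧
  (∀ β, β < κ → ∃ γ ∈ C, β < γ)

/-- `S` is a stationary subset of `κ`: it meets every club. -/
def IsStationaryIn (κ : Ordinal) (S : Set Ordinal) : Prop :=
  S ⊆ Set.Iio κ ∧ ∀ C : Set Ordinal, IsClubIn κ C → (S ∩ C).Nonempty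

/-- The nonstationary ideal on `κ`: subsets of `κ` disjoint from some club. -/
def NSIdeal (κ : Ordinal) : Set (Set Ordinal) :=
  {A | A ⊆ Set.Iio κ ∧ ∃ C : Set Ordinal, IsClubIn κ C ∧ A ∩ C = ∅}

/-- `E^κ_ω`, the set of ordinals below `κ` of cofinality `ω`. -/
def Ecofomega (κ : Ordinal) : Set Ordinal :=
  {α : Ordinal | α < κ ∧ Ordinal.cof α = Cardinal.aleph0}

/-- The intersection of the values `T β` for `β < α`. -/
def InterBelow (T : Ordinal → Set Ordinal) (α : Ordinal) : Set Ordinal :=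
  ⋂ β ∈ Set.Iio α, T β

/-! ### The Banach–Mazur game `BM_{<ζ}(I,S)` (empty moves first at every stage).

A strategy for a player is represented as a function giving that player's move at stage `α`
as a function of the opponent's moves (it may only depend on the moves made before the
player's move at stage `α`, which is the first conjunct in each definition below).  A
strategy is winning if it always produces legal moves (as long as the opponent has played
legally and the game is not yet over) and every run in which the opponent plays legally is
won by the player. -/

/-- `σ` is a winning strategy for the player *empty* in `BM_{<ζ}(I,S)`.
Here `T : Ordinal → Set Ordinal` ranges over the sequences of moves of nonempty, and
empty's move at stage `α` is `σ α T`. Empty wins a run iff at some stage `α < ζ`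
the intersection of all moves made before stage `α` belongs to `I`. -/
def EmptyBMStratWins (ζ : Ordinal) (I : Set (Set Ordinal)) (S : Set Ordinal)
    (σ : Ordinal → (Ordinal → Set Ordinal) → Set Ordinal) : Prop :=
  (∀ (α : Ordinal) (T T' : Ordinal → Set Ordinal),
      (∀ β < α, T β = T' β) → σ α T = σ α T') ∧
  ∀ T : Ordinal → Set Ordinal,
    (∀ α < ζ, (∀ β < α, T β ∉ I ∧ T β ⊆ σ β T) → InterBelow T α ∉ I →
      σ α T ∉ I ∧ σ α T ⊆ S ∧ ∀ β < α, σ α T ⊆ T β) ∧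
    ((∀ α < ζ, T α ∉ I ∧ T α ⊆ σ α T) → ∃ α < ζ, InterBelow T α ∈ I)

/-- Empty has a winning strategy in `BM_{<ζ}(I,S)`. -/
def EmptyWinsBM (ζ : Ordinal) (I : Set (Set Ordinal)) (S : Set Ordinal) : Prop :=
  ∃ σ, EmptyBMStratWins ζ I S σ

/-- Nonempty has a winning strategy in `BM_{<ζ}(I,S)`.
Here `Sq : Ordinal → Set Ordinal` ranges over the sequences of moves of empty, and
nonempty's move at stage `α` is `τ α Sq`.  The strategy must respond legally to legal
play by empty, and guarantee that empty is never stuck, i.e. that the intersection of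
all previous moves never lies in `I` at any stage `α < ζ`. -/
def NonemptyWinsBM (ζ : Ordinal) (I : Set (Set Ordinal)) (S : Set Ordinal) : Prop :=
  ∃ τ : Ordinal → (Ordinal → Set Ordinal) → Set Ordinal,
    (∀ (α : Ordinal) (Sq Sq' : Ordinal → Set Ordinal),
        (∀ β ≤ α, Sq β = Sq' β) → τ α Sq = τ α Sq') ∧
    ∀ Sq : Ordinal → Set Ordinal, ∀ α, α < ζ →
      ((∀ β ≤ α, Sq β ∉ I ∧ Sq β ⊆ S ∧ ∀ γ < β, Sq β ⊆ Sq γ ∩ τ γ Sq) →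
        τ α Sq ∉ I ∧ τ α Sq ⊆ Sq α) ∧
      ((∀ β < α, Sq β ∉ I ∧ Sq β ⊆ S ∧ ∀ γ < β, Sq β ⊆ Sq γ ∩ τ γ Sq) →
        InterBelow (fun β => Sq β ∩ τ β Sq) α ∉ I)

/-! ### The variant `BM'_{<ζ}(I,S)` in which nonempty makes the first move at stage `0`
(playing an `I`-positive `T 0 ⊆ S`), after which play continues as in `BM` with empty
moving first at every later stage. -/

/-- `σ` is a winning strategy for empty in `BM'_{<ζ}(I,S)` (`σ` is only used at
stages `α > 0`, since nonempty alone moves at stage `0`). -/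
def EmptyBMPrimeStratWins (ζ : Ordinal) (I : Set (Set Ordinal)) (S : Set Ordinal)
    (σ : Ordinal → (Ordinal → Set Ordinal) → Set Ordinal) : Prop :=
  (∀ (α : Ordinal) (T T' : Ordinal → Set Ordinal),
      (∀ β < α, T β = T' β) → σ α T = σ α T') ∧
  ∀ T : Ordinal → Set Ordinal,
    (∀ α, 0 < α → α < ζ → (T 0 ∉ I ∧ T 0 ⊆ S) →
      (∀ β, 0 < β → β < α → T β ∉ I ∧ T β ⊆ σ β T) → InterBelow T α ∉ I →
      σ α T ∉ I ∧ ∀ β < α, σ α T ⊆ T β) ∧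
    ((0 < ζ → T 0 ∉ I ∧ T 0 ⊆ S) → (∀ α, 0 < α → α < ζ → T α ∉ I ∧ T α ⊆ σ α T) →
      ∃ α < ζ, InterBelow T α ∈ I)

/-- Empty has a winning strategy in `BM'_{<ζ}(I,S)`. -/
def EmptyWinsBMPrime (ζ : Ordinal) (I : Set (Set Ordinal)) (S : Set Ordinal) : Prop :=
  ∃ σ, EmptyBMPrimeStratWins ζ I S σ

/-- Nonempty has a winning strategy in `BM'_{<ζ}(I,S)`: a first move `T0` (an
`I`-positive subset of `S`, provided the game has any stage at all) together with
responses `τ α Sq` to empty's moves `Sq β` (`0 < β ≤ α`) at all later stages `α`. -/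
def NonemptyWinsBMPrime (ζ : Ordinal) (I : Set (Set Ordinal)) (S : Set Ordinal) : Prop :=
  ∃ T0 : Set Ordinal, ∃ τ : Ordinal → (Ordinal → Set Ordinal) → Set Ordinal,
    (0 < ζ → T0 ∉ I ∧ T0 ⊆ S) ∧
    (∀ (α : Ordinal) (Sq Sq' : Ordinal → Set Ordinal),
        (∀ β ≤ α, Sq β = Sq' β) → τ α Sq = τ α Sq') ∧
    ∀ Sq : Ordinal → Set Ordinal, ∀ α, 0 < α → α < ζ →
      ((∀ β, 0 < β → β ≤ α →
          Sq β ∉ I ∧ Sq β ⊆ T0 ∧ ∀ γ, 0 < γ → γ < β → Sq β ⊆ Sq γ ∩ τ γ Sq) →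
        τ α Sq ∉ I ∧ τ α Sq ⊆ Sq α) ∧
      ((∀ β, 0 < β → β < α →
          Sq β ∉ I ∧ Sq β ⊆ T0 ∧ ∀ γ, 0 < γ → γ < β → Sq β ⊆ Sq γ ∩ τ γ Sq) →
        (T0 ∩ ⋂ β ∈ Set.Ioo (0 : Ordinal) α, (Sq β ∩ τ β Sq)) ∉ I)

/-! ### The pressing down game `PD_{<ζ}(I,S)`.

At each stage `α < ζ` empty plays a regressive function `f_α : κ → κ` and nonempty plays
a set `T_α ⊆ S` contained in all previous `T_β` on which `f_α` is constant.  Empty wins a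
run iff `T_α ∈ I` for some `α < ζ`. -/

/-- Empty has a winning strategy in `PD_{<ζ}(I,S)`: a (history-dependent) choice of
regressive functions such that in every run in which nonempty plays legally, some move
of nonempty lies in `I`. -/
def EmptyWinsPD (ζ : Ordinal) (I : Set (Set Ordinal)) (S : Set Ordinal) : Prop :=
  ∃ σ : Ordinal → (Ordinal → Set Ordinal) → (Ordinal → Ordinal),
    (∀ (α : Ordinal) (T T' : Ordinal → Set Ordinal),
        (∀ β < α, T β = T' β) → σ α T = σ α T') ∧
    (∀ (α : Ordinal) (T : Ordinal → Set Ordinal) (β : Ordinal), 0 < β → σ α T β < β) ∧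
    ∀ T : Ordinal → Set Ordinal,
      (∀ α, α < ζ →
        T α ⊆ S ∧ (∀ β < α, T α ⊆ T β) ∧ ∃ c, ∀ x ∈ T α, σ α T x = c) →
      ∃ α, α < ζ ∧ T α ∈ I

/-- Nonempty has a winning strategy in `PD_{<ζ}(I,S)`: responses `τ α g` to the
sequence `g` of regressive functions played by empty, which are always legal
(homogeneous subsets of `S` and of all previous responses) and never lie in `I`. -/
def NonemptyWinsPD (ζ : Ordinal) (I : Set (Set Ordinal)) (S : Set Ordinal) : Prop :=
  ∃ τ : Ordinal → (Ordinal → (Ordinal → Ordinal)) → Set Ordinal,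
    (∀ (α : Ordinal) (g g' : Ordinal → (Ordinal → Ordinal)),
        (∀ β ≤ α, g β = g' β) → τ α g = τ α g') ∧
    ∀ g : Ordinal → (Ordinal → Ordinal), (∀ α β, 0 < β → g α β < β) →
      ∀ α, α < ζ →
        τ α g ⊆ S ∧ (∀ β < α, τ α g ⊆ τ β g) ∧ (∃ c, ∀ x ∈ τ α g, g α x = c) ∧
        τ α g ∉ I

/-! ### The games of length `ω + 1` on `κ`: `BM_{≤ω}(I,S)` and the ideal game.

In `BM_{≤ω}(I,S)` the players move at the finite stages `n < ω` and empty wins a run iff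
`⋂_{n<ω} S_n ∈ I`; in the ideal game (played on `κ` itself) empty wins iff
`⋂_{n<ω} S_n = ∅`. -/

/-- `σ` is a winning strategy for empty in `BM_{≤ω}(I,S)`. -/
def EmptyBMOmegaStratWins (I : Set (Set Ordinal)) (S : Set Ordinal)
    (σ : ℕ → (ℕ → Set Ordinal) → Set Ordinal) : Prop :=
  (∀ (n : ℕ) (T T' : ℕ → Set Ordinal), (∀ m < n, T m = T' m) → σ n T = σ n T') ∧
  ∀ T : ℕ → Set Ordinal,
    (∀ n, (∀ m < n, T m ∉ I ∧ T m ⊆ σ m T) →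
      σ n T ∉ I ∧ σ n T ⊆ S ∧ ∀ m < n, σ n T ⊆ T m) ∧
    ((∀ n, T n ∉ I ∧ T n ⊆ σ n T) → (⋂ n, σ n T) ∈ I)

/-- Empty has a winning strategy in `BM_{≤ω}(I,S)`. -/
def EmptyWinsBMOmega (I : Set (Set Ordinal)) (S : Set Ordinal) : Prop :=
  ∃ σ, EmptyBMOmegaStratWins I S σ

/-- Nonempty has a winning strategy in `BM_{≤ω}(I,S)`. -/
def NonemptyWinsBMOmega (I : Set (Set Ordinal)) (S : Set Ordinal) : Prop :=
  ∃ τ : ℕ → (ℕ → Set Ordinal) → Set Ordinal,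
    (∀ (n : ℕ) (Sq Sq' : ℕ → Set Ordinal), (∀ m ≤ n, Sq m = Sq' m) → τ n Sq = τ n Sq') ∧
    ∀ Sq : ℕ → Set Ordinal,
      (∀ n, (∀ m ≤ n, Sq m ∉ I ∧ Sq m ⊆ S ∧ ∀ k < m, Sq m ⊆ Sq k ∩ τ k Sq) →
        τ n Sq ∉ I ∧ τ n Sq ⊆ Sq n) ∧
      ((∀ n, Sq n ∉ I ∧ Sq n ⊆ S ∧ ∀ k < n, Sq n ⊆ Sq k ∩ τ k Sq) →
        (⋂ n, Sq n) ∉ I)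

/-- Empty has a winning strategy in the ideal game on `I` (played on `κ`). -/
def EmptyWinsIdealGame (κ : Ordinal) (I : Set (Set Ordinal)) : Prop :=
  ∃ σ : ℕ → (ℕ → Set Ordinal) → Set Ordinal,
    (∀ (n : ℕ) (T T' : ℕ → Set Ordinal), (∀ m < n, T m = T' m) → σ n T = σ n T') ∧
    ∀ T : ℕ → Set Ordinal,
      (∀ n, (∀ m < n, T m ∉ I ∧ T m ⊆ σ m T) →
        σ n T ∉ I ∧ σ n T ⊆ Set.Iio κ ∧ ∀ m < n, σ n T ⊆ T m) ∧
      ((∀ n, T n ∉ I ∧ T n ⊆ σ n T) → (⋂ n, σ n T) = ∅)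

/-- Nonempty has a winning strategy in the ideal game on `I` (played on `κ`). -/
def NonemptyWinsIdealGame (κ : Ordinal) (I : Set (Set Ordinal)) : Prop :=
  ∃ τ : ℕ → (ℕ → Set Ordinal) → Set Ordinal,
    (∀ (n : ℕ) (Sq Sq' : ℕ → Set Ordinal), (∀ m ≤ n, Sq m = Sq' m) → τ n Sq = τ n Sq') ∧
    ∀ Sq : ℕ → Set Ordinal,
      (∀ n, (∀ m ≤ n, Sq m ∉ I ∧ Sq m ⊆ Set.Iio κ ∧ ∀ k < m, Sq m ⊆ Sq k ∩ τ k Sq) →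
        τ n Sq ∉ I ∧ τ n Sq ⊆ Sq n) ∧
      ((∀ n, Sq n ∉ I ∧ Sq n ⊆ Set.Iio κ ∧ ∀ k < n, Sq n ⊆ Sq k ∩ τ k Sq) →
        (⋂ n, Sq n).Nonempty)

/-! ### Auxiliary material for Statement 12 -/

/-- The set `S ∩ ⋂_{β<α} (Sq β ∩ τ β Sq)`. -/
def Xset (S : Set Ordinal) (τ : Ordinal → (Ordinal → Set Ordinal) → Set Ordinal)
    (Sq : Ordinal → Set Ordinal) (α : Ordinal) : Set Ordinal :=
  S ∩ ⋂ β ∈ Set.Iio α, (Sq β ∩ τ β Sq)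

/-- Any regressive function is constant on an `I`-positive subset of an `I`-positive set. -/
lemma exists_homog {κ : Ordinal} {I : Set (Set Ordinal)}
    (hκ : RegUncountable κ) (hI : FineNormalIdeal κ I)
    (A : Set Ordinal) (hA : A ⊆ Set.Iio κ) (hApos : A ∉ I)
    (f : Ordinal → Ordinal) (hf : ∀ β, 0 < β → f β < β) :
    ∃ B, B ⊆ A ∧ B ∉ I ∧ ∃ c, ∀ x ∈ B, f x = c := by
  by_contra hcon
  push_neg at hcon
  have h1 : ∀ γ : Ordinal, A ∩ f ⁻¹' {γ} ∈ I := by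
    intro γ
    by_contra hpos
    obtain ⟨x, hx, hne⟩ := hcon (A ∩ f ⁻¹' {γ}) Set.inter_subset_left hpos γ
    exact hne hx.2
  have hD : {β : Ordinal | β < κ ∧ ∃ γ < β, β ∈ A ∩ f ⁻¹' {γ}} ∈ I :=
    hI.2.2 (fun γ => A ∩ f ⁻¹' {γ}) (fun γ _ => h1 γ)
  have hκpos : (0 : Ordinal) < κ := by
    rcases eq_zero_or_pos κ with h0 | h0
    · exfalso
      have h2 := hκ.2.1
      rw [h0] at h2
      simp at h2
    · exact h0
  have h0 : ({0} : Set Ordinal) ∈ I := hI.1.2.1 0 hκpos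
  have hsub : A ⊆ {β : Ordinal | β < κ ∧ ∃ γ < β, β ∈ A ∩ f ⁻¹' {γ}} ∪ {0} := by
    intro x hx
    rcases eq_or_ne x 0 with h | h
    · exact Or.inr (by simp [h])
    · refine Or.inl ⟨hA hx, f x, hf x (pos_iff_ne_zero.mpr h), hx, rfl⟩
  exact hApos (hI.1.2.2.1 A _ hsub (hI.1.2.2.2.1 _ hD _ h0))

open Classical in
/-- The simulated moves of player empty in the Banach–Mazur game, given the regressive
functions `g` played by empty in the pressing down game. -/
noncomputable def SqAux (I : Set (Set Ordinal)) (S : Set Ordinal)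
    (τ : Ordinal → (Ordinal → Set Ordinal) → Set Ordinal)
    (g : Ordinal → Ordinal → Ordinal) : Ordinal → Set Ordinal :=
  (wellFounded_lt (α := Ordinal)).fix (C := fun _ => Set Ordinal) fun α rec =>
    if h : ∃ B, B ⊆ Xset S τ (fun γ => if hh : γ < α then rec γ hh else ∅) α ∧ B ∉ I ∧
        ∃ c, ∀ x ∈ B, g α x = c
    then h.choose else ∅

open Classical in
lemma SqAux_def (I : Set (Set Ordinal)) (S : Set Ordinal)
    (τ : Ordinal → (Ordinal → Set Ordinal) → Set Ordinal)
    (g : Ordinal → Ordinal → Ordinal) (α : Ordinal) :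
    SqAux I S τ g α =
      if h : ∃ B, B ⊆ Xset S τ
          (fun γ => if hh : γ < α then SqAux I S τ g γ else ∅) α ∧ B ∉ I ∧
          ∃ c, ∀ x ∈ B, g α x = c
      then h.choose else ∅ := by
  exact WellFounded.fix_eq _ _ _

open Classical in
lemma SqAux_congr (I : Set (Set Ordinal)) (S : Set Ordinal)
    (τ : Ordinal → (Ordinal → Set Ordinal) → Set Ordinal) (α : Ordinal) :
    ∀ g g' : Ordinal → Ordinal → Ordinal, (∀ β ≤ α, g β = g' β) →
      SqAux I S τ g α = SqAux I S τ g' α := by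
  induction α using Ordinal.induction with
  | _ α IH =>
  intro g g' hgg
  have htr : (fun γ => if hh : γ < α then SqAux I S τ g γ else ∅)
      = (fun γ => if hh : γ < α then SqAux I S τ g' γ else ∅) := by
    funext γ
    by_cases hγ : γ < α
    · simp only [dif_pos hγ]
      exact IH γ hγ g g' (fun β hβ => hgg β (le_trans hβ hγ.le))
    · simp [hγ]
  rw [SqAux_def, SqAux_def, htr, hgg α le_rfl]

/-- If nonempty wins `BM_{<ζ}(I,S)`, then nonempty wins `PD_{<ζ}(I,S)`. -/
theorem statement12 (κ ζ : Ordinal) (I : Set (Set Ordinal)) (S : Set Ordinal)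
    (hκ : RegUncountable κ) (hI : FineNormalIdeal κ I)
    (hSκ : S ⊆ Set.Iio κ) (hSpos : S ∉ I)
    (h : NonemptyWinsBM ζ I S) :
    NonemptyWinsPD ζ I S := by
  obtain ⟨τ, hτloc, hτwin⟩ := h
  classical
  have key : ∀ g : Ordinal → Ordinal → Ordinal, (∀ α β, 0 < β → g α β < β) →
      ∀ α, α < ζ → (SqAux I S τ g α ∉ I ∧ SqAux I S τ g α ⊆ S ∧
        (∀ γ < α, SqAux I S τ g α ⊆ SqAux I S τ g γ ∩ τ γ (SqAux I S τ g)) ∧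
        (∃ c, ∀ x ∈ SqAux I S τ g α, g α x = c)) := by
    intro g hg α
    induction α using Ordinal.induction with
    | _ α IH =>
    intro hαζ
    have htr : ∀ β < α, τ β (fun γ => if hh : γ < α then SqAux I S τ g γ else ∅)
        = τ β (SqAux I S τ g) := by
      intro β hβ
      apply hτloc
      intro γ hγ
      simp [lt_of_le_of_lt hγ hβ]
    have hX : Xset S τ (fun γ => if hh : γ < α then SqAux I S τ g γ else ∅) α
        = Xset S τ (SqAux I S τ g) α := by
      unfold Xset
      congr 1
      apply Set.iInter₂_congr
      intro β hβ
      have hβ' : β < α := hβ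
      simp only [htr β hβ', dif_pos hβ']
    have hleg : ∀ β < α, SqAux I S τ g β ∉ I ∧ SqAux I S τ g β ⊆ S ∧
        ∀ γ < β, SqAux I S τ g β ⊆ SqAux I S τ g γ ∩ τ γ (SqAux I S τ g) := by
      intro β hβ
      obtain ⟨h1, h2, h3, _⟩ := IH β hβ (hβ.trans hαζ)
      exact ⟨h1, h2, h3⟩
    have hIB : InterBelow (fun β => SqAux I S τ g β ∩ τ β (SqAux I S τ g)) α ∉ I :=
      (hτwin (SqAux I S τ g) α hαζ).2 hleg
    have hXsubS : Xset S τ (SqAux I S τ g) α ⊆ S := Set.inter_subset_left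
    have hXpos : Xset S τ (SqAux I S τ g) α ∉ I := by
      rcases eq_or_ne α 0 with h0 | h0
      · subst h0
        have hXeq : Xset S τ (SqAux I S τ g) 0 = S := by
          simp [Xset, not_lt_zero]
        rw [hXeq]; exact hSpos
      · have h0' : (0 : Ordinal) < α := pos_iff_ne_zero.mpr h0
        have hsub : InterBelow (fun β => SqAux I S τ g β ∩ τ β (SqAux I S τ g)) α
            ⊆ Xset S τ (SqAux I S τ g) α := by
          intro x hx
          exact ⟨(hleg 0 h0').2.1 (Set.mem_iInter₂.mp hx 0 h0').1, hx⟩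
        intro hmem
        exact hIB (hI.1.2.2.1 _ _ hsub hmem)
    obtain ⟨B, hBsub, hBpos, hBhom⟩ :=
      exists_homog hκ hI _ (hXsubS.trans hSκ) hXpos (g α) (hg α)
    have hex : ∃ B, B ⊆ Xset S τ (fun γ => if hh : γ < α then SqAux I S τ g γ else ∅) α
        ∧ B ∉ I ∧ ∃ c, ∀ x ∈ B, g α x = c := by
      rw [hX]; exact ⟨B, hBsub, hBpos, hBhom⟩
    have hval : SqAux I S τ g α = hex.choose := by rw [SqAux_def, dif_pos hex]
    obtain ⟨hc1', hc2, hc3⟩ := hex.choose_spec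
    have hc1 := hc1'.trans hX.subset
    rw [hval]
    refine ⟨hc2, fun x hx => (hc1 hx).1, ?_, hc3⟩
    intro γ hγ x hx
    exact Set.mem_iInter₂.mp (hc1 hx).2 γ hγ
  refine ⟨fun α g => τ α (SqAux I S τ g), ?_, ?_⟩
  · intro α g g' hgg
    apply hτloc
    intro β hβ
    exact SqAux_congr I S τ β g g' (fun γ hγ => hgg γ (hγ.trans hβ))
  · intro g hg α hα
    have hmove := (hτwin (SqAux I S τ g) α hα).1 (by
      intro β hβ
      obtain ⟨h1, h2, h3, _⟩ := key g hg β (lt_of_le_of_lt hβ hα)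
      exact ⟨h1, h2, h3⟩)
    obtain ⟨hk1, hk2, hk3, c, hc⟩ := key g hg α hα
    refine ⟨hmove.2.trans hk2, ?_, ⟨c, fun x hx => hc x (hmove.2 hx)⟩, hmove.1⟩
    intro β hβ x hx
    exact (hk3 β hβ (hmove.2 hx)).2


end BMPDGames
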